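/- arXiv:1207.6200 — 5 statements merged into one kernel-verified Lean document; each statement's English description precedes it below -/
import Mathlib

section
/- Let K ⊆ L ⊆ M be languages over an alphabet E with uncontrollable events E_u ⊆ E. If K is controllable with respect to \overline{L} and E_u, and L is controllable with respect to \overline{M} and E_u, then K is controllable with respect to \overline{M} and E_u (transitivity of controllability). -/
open scoped Classical

/-- Natural projection: erase letters not in `A`. -/
noncomputable def proj {Ev : Type*} (A : Set Ev) (w : List Ev) : List Ev :=
  w.filter (fun a => decide (a ∈ A))

/-- Projection of a language. -/
noncomputable def projL {Ev : Type*} (A : Set Ev) (L : Set (List Ev)) : Set (List Ev) :=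
  proj A '' L

/-- Words over an alphabet `A`, i.e., `A*`. -/
def star {Ev : Type*} (A : Set Ev) : Set (List Ev) := {w | ∀ a ∈ w, a ∈ A}

/-- Synchronous product of `L₁ ⊆ A*` and `L₂ ⊆ B*`. -/
noncomputable def sync {Ev : Type*} (A B : Set Ev) (L1 L2 : Set (List Ev)) :
    Set (List Ev) :=
  {w | w ∈ star (A ∪ B) ∧ proj A w ∈ L1 ∧ proj B w ∈ L2}

/-- Prefix closure of a language. -/
def prefixCl {Ev : Type*} (L : Set (List Ev)) : Set (List Ev) := {w | ∃ v, w ++ v ∈ L}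

/-- Controllability of `K` with respect to (prefix-closed) `L` and uncontrollable events `Eu`. -/
def controllable {Ev : Type*} (K L : Set (List Ev)) (Eu : Set Ev) : Prop :=
  ∀ s ∈ prefixCl K, ∀ u ∈ Eu, s ++ [u] ∈ L → s ++ [u] ∈ prefixCl K

/-- Supremal controllable sublanguage of `K` w.r.t. `N` and `U`. -/
noncomputable def supC {Ev : Type*} (K N : Set (List Ev)) (U : Set Ev) : Set (List Ev) :=
  ⋃₀ {M | M ⊆ K ∧ controllable M N U}

/-- `proj A` is an `L`-observer. -/
def observer {Ev : Type*} (A : Set Ev) (L : Set (List Ev)) : Prop :=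
  ∀ t ∈ projL A L, ∀ s ∈ prefixCl L, proj A s <+: t →
    ∃ u, s ++ u ∈ L ∧ proj A (s ++ u) = t

/-- `proj A` is locally control consistent (LCC) for `L` (w.r.t. uncontrollable events `Eu`). -/
def lcc {Ev : Type*} (A Eu : Set Ev) (L : Set (List Ev)) : Prop :=
  ∀ s ∈ L, ∀ σ ∈ A ∩ Eu, proj A s ++ [σ] ∈ projL A L →
    (∃ u, (∀ a ∈ u, a ∉ A) ∧ s ++ u ++ [σ] ∈ L) →
    ∃ u, (∀ a ∈ u, a ∈ Eu ∧ a ∉ A) ∧ s ++ u ++ [σ] ∈ L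

/-- transitivity of controllability. -/
theorem stmt2 {Ev : Type*} (K L M : Set (List Ev)) (Eu : Set Ev)
    (hKL : K ⊆ L) (hLM : L ⊆ M)
    (h1 : controllable K (prefixCl L) Eu)
    (h2 : controllable L (prefixCl M) Eu) :
    controllable K (prefixCl M) Eu := by
  intro s hs u hu hsM
  have hsL : s ∈ prefixCl L := by
    obtain ⟨v, hv⟩ := hs
    exact ⟨v, hKL hv⟩
  exact h1 s hs u hu (h2 s hsL u hu hsM)
end

section
/- Let E₁, E₂ ⊆ E with E₁ ∩ E₂ ⊆ E_k ⊆ E, and let P_k : E* → E_k* be the natural projection. Then for any languages L₁ ⊆ E₁* and L₂ ⊆ E₂*, P_k(L₁ ∥ L₂) = P_k(L₁) ∥ P_k(L₂). -/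
open scoped Classical

private lemma proj_cons {Ev : Type*} (A : Set Ev) (a : Ev) (l : List Ev) :
    proj A (a :: l) = if a ∈ A then a :: proj A l else proj A l := by
  by_cases h : a ∈ A <;> simp [proj, List.filter_cons, h]

private lemma proj_nil {Ev : Type*} (A : Set Ev) : proj A ([] : List Ev) = [] := rfl

private lemma proj_proj {Ev : Type*} (A B : Set Ev) (l : List Ev) :
    proj A (proj B l) = proj (A ∩ B) l := by
  induction l with
  | nil => rfl
  | cons a t ih =>
    by_cases hB : a ∈ B <;> by_cases hA : a ∈ A <;>
      simp [proj_cons, hA, hB, ih, Set.mem_inter_iff]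

private lemma mem_proj {Ev : Type*} {A : Set Ev} {a : Ev} {l : List Ev} :
    a ∈ proj A l ↔ a ∈ l ∧ a ∈ A := by
  simp [proj, List.mem_filter]

private lemma strip_lemma {Ev : Type*} (E1 Ek : Set Ev) (c : Ev) (w' x1 : List Ev)
    (hhd : ∀ a t, x1 = a :: t → a ∈ Ek)
    (h1 : proj (E1 ∩ Ek) (c :: w') = proj Ek x1) :
    ∃ x1', proj (E1 ∩ Ek) w' = proj Ek x1' ∧ x1'.length ≤ x1.length ∧
      (∀ a ∈ x1', a ∈ x1) ∧ (if c ∈ E1 ∩ Ek then x1 = c :: x1' else x1 = x1') := by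
  by_cases hc1 : c ∈ E1 ∩ Ek
  · rw [proj_cons] at h1; simp only [hc1, if_true] at h1
    cases x1 with
    | nil => simp [proj_nil] at h1
    | cons a t =>
      have haEk := hhd a t rfl
      rw [proj_cons] at h1; simp only [haEk, if_true] at h1
      obtain ⟨rfl, h1'⟩ := List.cons_eq_cons.mp h1
      exact ⟨t, h1', by simp, fun a ha => by simp [ha], by simp [hc1]⟩
  · rw [proj_cons] at h1; simp only [hc1, if_false] at h1
    exact ⟨x1, h1, le_refl _, fun a ha => ha, by simp [hc1]⟩

private lemma merge_lemma {Ev : Type*} (E1 E2 Ek : Set Ev) (hsh : E1 ∩ E2 ⊆ Ek) :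
    ∀ n (w x1 x2 : List Ev), x1.length + x2.length + w.length ≤ n →
    (∀ a ∈ x1, a ∈ E1) → (∀ a ∈ x2, a ∈ E2) →
    (∀ a ∈ w, a ∈ (E1 ∩ Ek) ∪ (E2 ∩ Ek)) →
    proj (E1 ∩ Ek) w = proj Ek x1 → proj (E2 ∩ Ek) w = proj Ek x2 →
    ∃ v, (∀ a ∈ v, a ∈ E1 ∪ E2) ∧ proj E1 v = x1 ∧ proj E2 v = x2 ∧ proj Ek v = w := by
  intro n
  induction n with
  | zero =>
    intro w x1 x2 hlen _ _ _ _ _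
    obtain ⟨hw, hx1, hx2⟩ : w = [] ∧ x1 = [] ∧ x2 = [] := by
      refine ⟨?_, ?_, ?_⟩ <;> (apply List.eq_nil_of_length_eq_zero; omega)
    subst hw; subst hx1; subst hx2
    exact ⟨[], by simp, rfl, rfl, rfl⟩
  | succ n ih =>
    intro w x1 x2 hlen hx1E hx2E hwE h1 h2
    by_cases hcase1 : ∃ a t1, x1 = a :: t1 ∧ a ∉ Ek
    · obtain ⟨a, t1, rfl, haEk⟩ := hcase1
      have ha1 : a ∈ E1 := hx1E a (by simp)
      have ha2 : a ∉ E2 := fun h => haEk (hsh ⟨ha1, h⟩)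
      have h1' : proj (E1 ∩ Ek) w = proj Ek t1 := by
        rw [h1, proj_cons]; simp [haEk]
      obtain ⟨v, hv, hv1, hv2, hvk⟩ :=
        ih w t1 x2 (by simp at hlen ⊢; omega)
          (fun b hb => hx1E b (by simp [hb])) hx2E hwE h1' h2
      refine ⟨a :: v, ?_, ?_, ?_, ?_⟩
      · intro x hx
        rcases List.mem_cons.mp hx with rfl | hx
        · exact Or.inl ha1
        · exact hv x hx
      · rw [proj_cons]; simp [ha1, hv1]
      · rw [proj_cons]; simp [ha2, hv2]
      · rw [proj_cons]; simp [haEk, hvk]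
    · by_cases hcase2 : ∃ b t2, x2 = b :: t2 ∧ b ∉ Ek
      · obtain ⟨b, t2, rfl, hbEk⟩ := hcase2
        have hb2 : b ∈ E2 := hx2E b (by simp)
        have hb1 : b ∉ E1 := fun h => hbEk (hsh ⟨h, hb2⟩)
        have h2' : proj (E2 ∩ Ek) w = proj Ek t2 := by
          rw [h2, proj_cons]; simp [hbEk]
        obtain ⟨v, hv, hv1, hv2, hvk⟩ :=
          ih w x1 t2 (by simp at hlen ⊢; omega)
            hx1E (fun c hc => hx2E c (by simp [hc])) hwE h1 h2'
        refine ⟨b :: v, ?_, ?_, ?_, ?_⟩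
        · intro x hx
          rcases List.mem_cons.mp hx with rfl | hx
          · exact Or.inr hb2
          · exact hv x hx
        · rw [proj_cons]; simp [hb1, hv1]
        · rw [proj_cons]; simp [hb2, hv2]
        · rw [proj_cons]; simp [hbEk, hvk]
      · -- all heads (if any) are in Ek
        push_neg at hcase1 hcase2
        have hhd1 : ∀ a t, x1 = a :: t → a ∈ Ek := fun a t h => hcase1 a t h
        have hhd2 : ∀ a t, x2 = a :: t → a ∈ Ek := fun a t h => hcase2 a t h
        cases w with
        | nil =>
          have hx1nil : x1 = [] := by
            cases x1 with
            | nil => rfl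
            | cons a t =>
              exfalso
              have haEk := hhd1 a t rfl
              rw [proj_cons] at h1; simp [haEk, proj_nil] at h1
          have hx2nil : x2 = [] := by
            cases x2 with
            | nil => rfl
            | cons a t =>
              exfalso
              have haEk := hhd2 a t rfl
              rw [proj_cons] at h2; simp [haEk, proj_nil] at h2
          subst hx1nil; subst hx2nil
          exact ⟨[], by simp, rfl, rfl, rfl⟩
        | cons c w' =>
          have hcU : c ∈ (E1 ∩ Ek) ∪ (E2 ∩ Ek) := hwE c (by simp)
          have hcEk : c ∈ Ek := by rcases hcU with h | h <;> exact h.2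
          have hcE12 : c ∈ E1 ∪ E2 := hcU.imp And.left And.left
          obtain ⟨x1', h1', hlen1, hsub1, hif1⟩ := strip_lemma E1 Ek c w' x1 hhd1 h1
          obtain ⟨x2', h2', hlen2, hsub2, hif2⟩ := strip_lemma E2 Ek c w' x2 hhd2 h2
          obtain ⟨v, hv, hv1, hv2, hvk⟩ :=
            ih w' x1' x2' (by simp at hlen; omega)
              (fun a ha => hx1E a (hsub1 a ha)) (fun a ha => hx2E a (hsub2 a ha))
              (fun a ha => hwE a (by simp [ha])) h1' h2'
          refine ⟨c :: v, ?_, ?_, ?_, ?_⟩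
          · intro x hx
            rcases List.mem_cons.mp hx with rfl | hx
            · exact hcE12
            · exact hv x hx
          · rw [proj_cons]
            by_cases hc1 : c ∈ E1
            · have : c ∈ E1 ∩ Ek := ⟨hc1, hcEk⟩
              simp only [this, if_true] at hif1
              simp [hc1, hv1, hif1]
            · have : c ∉ E1 ∩ Ek := fun h => hc1 h.1
              simp only [this, if_false] at hif1
              simp [hc1, hv1, hif1]
          · rw [proj_cons]
            by_cases hc2 : c ∈ E2
            · have : c ∈ E2 ∩ Ek := ⟨hc2, hcEk⟩
              simp only [this, if_true] at hif2
              simp [hc2, hv2, hif2]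
            · have : c ∉ E2 ∩ Ek := fun h => hc2 h.1
              simp only [this, if_false] at hif2
              simp [hc2, hv2, hif2]
          · rw [proj_cons]; simp [hcEk, hvk]

/-- the projection distributes over the synchronous product when the
shared alphabet is contained in the projection alphabet. -/
theorem stmt3 {Ev : Type*} (E E1 E2 Ek : Set Ev)
    (hE1 : E1 ⊆ E) (hE2 : E2 ⊆ E) (hEk : Ek ⊆ E) (hshared : E1 ∩ E2 ⊆ Ek)
    (L1 L2 : Set (List Ev)) (hL1 : L1 ⊆ star E1) (hL2 : L2 ⊆ star E2) :
    projL Ek (sync E1 E2 L1 L2) =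
      sync (E1 ∩ Ek) (E2 ∩ Ek) (projL Ek L1) (projL Ek L2) := by
  ext w
  constructor
  · rintro ⟨v, ⟨hvs, hv1, hv2⟩, rfl⟩
    refine ⟨?_, ?_, ?_⟩
    · intro a ha
      have := mem_proj.mp ha
      rcases hvs a this.1 with h | h
      · exact Or.inl ⟨h, this.2⟩
      · exact Or.inr ⟨h, this.2⟩
    · refine ⟨proj E1 v, hv1, ?_⟩
      rw [proj_proj, proj_proj]
      congr 1
      ext a; simp [Set.mem_inter_iff]; tauto
    · refine ⟨proj E2 v, hv2, ?_⟩
      rw [proj_proj, proj_proj]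
      congr 1
      ext a; simp [Set.mem_inter_iff]; tauto
  · rintro ⟨hws, ⟨x1, hx1L, h1⟩, ⟨x2, hx2L, h2⟩⟩
    obtain ⟨v, hv, hv1, hv2, hvk⟩ :=
      merge_lemma E1 E2 Ek hshared (x1.length + x2.length + w.length) w x1 x2
        (le_refl _) (hL1 hx1L) (hL2 hx2L) hws h1.symm h2.symm
    exact ⟨v, ⟨hv, hv1 ▸ hx1L, hv2 ▸ hx2L⟩, hvk⟩
end

section
/- Let L₁ ⊆ E₁* and L₂ ⊆ E₂* be prefix-closed languages, and let K_i ⊆ L_i be controllable with respect to L_i and E_{i,u} = E_i ∩ E_u for i = 1,2, where E = E₁ ∪ E₂. If K₁ and K₂ are synchronously nonconflicting (i.e., \overline{K₁ ∥ K₂} = \overline{K₁} ∥ \overline{K₂}), then K₁ ∥ K₂ is controllable with respect to L₁ ∥ L₂ and E_u. -/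
open scoped Classical

/-- controllability is preserved under synchronous composition of
synchronously nonconflicting languages. -/
theorem stmt5 {Ev : Type*} (E1 E2 Eu : Set Ev) (L1 L2 K1 K2 : Set (List Ev))
    (hL1 : L1 ⊆ star E1) (hL2 : L2 ⊆ star E2)
    (hL1c : prefixCl L1 = L1) (hL2c : prefixCl L2 = L2)
    (hK1 : K1 ⊆ L1) (hK2 : K2 ⊆ L2)
    (hc1 : controllable K1 L1 (E1 ∩ Eu))
    (hc2 : controllable K2 L2 (E2 ∩ Eu))
    (hnc : prefixCl (sync E1 E2 K1 K2) = sync E1 E2 (prefixCl K1) (prefixCl K2)) :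
    controllable (sync E1 E2 K1 K2) (sync E1 E2 L1 L2) Eu := by
  intro s hs u hu hsu
  rw [hnc] at hs ⊢
  obtain ⟨hst, h1, h2⟩ := hs
  obtain ⟨hst', g1, g2⟩ := hsu
  refine ⟨hst', ?_, ?_⟩
  · by_cases hE : u ∈ E1
    · have heq : proj E1 (s ++ [u]) = proj E1 s ++ [u] := by
        simp [proj, List.filter_append, hE]
      rw [heq] at g1 ⊢
      exact hc1 _ h1 u ⟨hE, hu⟩ g1
    · have heq : proj E1 (s ++ [u]) = proj E1 s := by
        simp [proj, List.filter_append, hE]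
      rw [heq]; exact h1
  · by_cases hE : u ∈ E2
    · have heq : proj E2 (s ++ [u]) = proj E2 s ++ [u] := by
        simp [proj, List.filter_append, hE]
      rw [heq] at g2 ⊢
      exact hc2 _ h2 u ⟨hE, hu⟩ g2
    · have heq : proj E2 (s ++ [u]) = proj E2 s := by
        simp [proj, List.filter_append, hE]
      rw [heq]; exact h2
end

section
/- Let L ⊆ E* be prefix-closed and K ⊆ L controllable with respect to L and E_u. Let E_k ⊆ E and P_k : E* → E_k*. If P_k is an L-observer and locally control consistent (LCC) with respect to L, then P_k(K) is controllable with respect to P_k(L) and E_k ∩ E_u. That is: for every s ∈ \overline{P_k(K)} and a ∈ E_k ∩ E_u with sa ∈ P_k(L), it holds that sa ∈ \overline{P_k(K)}. -/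
open scoped Classical

lemma filter_split {Ev : Type*} (f : Ev → Bool) :
    ∀ (k p q : List Ev), k.filter f = p ++ q →
      ∃ k₁ k₂, k = k₁ ++ k₂ ∧ k₁.filter f = p ∧ k₂.filter f = q := by
  intro k
  induction k with
  | nil =>
    intro p q h
    simp only [List.filter_nil] at h
    rcases List.append_eq_nil_iff.mp h.symm with ⟨rfl, rfl⟩
    exact ⟨[], [], rfl, rfl, rfl⟩
  | cons a k ih =>
    intro p q h
    by_cases hf : f a
    · rw [List.filter_cons_of_pos hf] at h
      cases p with
      | nil =>
        exact ⟨[], a :: k, rfl, rfl, by simpa [List.filter_cons_of_pos hf] using h⟩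
      | cons b p =>
        simp only [List.cons_append, List.cons.injEq] at h
        obtain ⟨rfl, h2⟩ := h
        obtain ⟨k₁, k₂, rfl, h1, h2'⟩ := ih p q h2
        exact ⟨a :: k₁, k₂, rfl, by simp [List.filter_cons_of_pos hf, h1], h2'⟩
    · rw [List.filter_cons_of_neg hf] at h
      obtain ⟨k₁, k₂, rfl, h1, h2⟩ := ih p q h
      exact ⟨a :: k₁, k₂, rfl, by simp [List.filter_cons_of_neg hf, h1], h2⟩

lemma filter_eq_single {Ev : Type*} (f : Ev → Bool) :
    ∀ (w : List Ev) (σ : Ev), w.filter f = [σ] →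
      ∃ u₁ u₂, w = u₁ ++ σ :: u₂ ∧ u₁.filter f = [] ∧ u₂.filter f = [] := by
  intro w
  induction w with
  | nil => intro σ h; simp at h
  | cons a k ih =>
    intro σ h
    by_cases hf : f a
    · rw [List.filter_cons_of_pos hf] at h
      simp only [List.cons.injEq] at h
      obtain ⟨rfl, h2⟩ := h
      exact ⟨[], k, rfl, rfl, h2⟩
    · rw [List.filter_cons_of_neg hf] at h
      obtain ⟨u₁, u₂, rfl, h1, h2⟩ := ih σ h
      exact ⟨a :: u₁, u₂, rfl, by simp [List.filter_cons_of_neg hf, h1], h2⟩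

lemma ctrl_ext {Ev : Type*} {K L : Set (List Ev)} {Eu : Set Ev}
    (hctrl : controllable K L Eu) (hLc : prefixCl L = L) :
    ∀ (u : List Ev), (∀ a ∈ u, a ∈ Eu) → ∀ s, s ∈ prefixCl K → s ++ u ∈ L →
      s ++ u ∈ prefixCl K := by
  intro u
  induction u with
  | nil => intro _ s hs _; simpa using hs
  | cons a u ih =>
    intro hall s hs hsL
    have haL : s ++ [a] ∈ L := by
      rw [← hLc]; exact ⟨u, by simpa using hsL⟩
    have h1 : s ++ [a] ∈ prefixCl K :=
      hctrl s hs a (hall a (by simp)) haL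
    have := ih (fun b hb => hall b (by simp [hb])) (s ++ [a]) h1 (by simpa using hsL)
    simpa using this

/-- if the projection is an L-observer and LCC for L, then controllability
is preserved under projection. -/
theorem stmt8 {Ev : Type*} (E Ek Eu : Set Ev) (hEk : Ek ⊆ E) (hEu : Eu ⊆ E)
    (L K : Set (List Ev)) (hL : L ⊆ star E) (hLc : prefixCl L = L) (hKL : K ⊆ L)
    (hctrl : controllable K L Eu)
    (hobs : observer Ek L) (hlcc : lcc Ek Eu L) :
    controllable (projL Ek K) (projL Ek L) (Ek ∩ Eu) := by
  intro s hs σ hσ hsL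
  -- unpack s ∈ prefixCl (projL Ek K)
  obtain ⟨v, k, hkK, hk⟩ := hs
  -- split k into a prefix projecting to s
  obtain ⟨k₁, k₂, rfl, hk1, hk2⟩ := filter_split _ k s v hk
  have hs' : k₁ ∈ prefixCl K := ⟨k₂, hkK⟩
  have hk₁L : k₁ ∈ L := by rw [← hLc]; exact ⟨k₂, hKL hkK⟩
  -- observer not even needed? we use it to get the lcc premise
  have hproj1 : proj Ek k₁ = s := hk1
  have hσEk : σ ∈ Ek := hσ.1
  have hlccPrem : ∃ u, (∀ a ∈ u, a ∉ Ek) ∧ k₁ ++ u ++ [σ] ∈ L := by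
    obtain ⟨w, hwL, hwproj⟩ := hobs (s ++ [σ]) hsL k₁ (by rw [hLc]; exact hk₁L)
      (by rw [hproj1]; exact ⟨[σ], rfl⟩)
    have : proj Ek w = [σ] := by
      have := hwproj
      rw [proj, List.filter_append, ← proj, ← proj, hproj1] at this
      exact List.append_cancel_left this
    obtain ⟨u₁, u₂, rfl, h1, h2⟩ := filter_eq_single _ w σ this
    refine ⟨u₁, fun a ha => ?_, ?_⟩
    · have := List.filter_eq_nil_iff.mp h1 a ha
      simpa using this
    · rw [← hLc]
      exact ⟨u₂, by simpa [List.append_assoc] using hwL⟩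
  obtain ⟨u, hu, huL⟩ := hlcc k₁ hk₁L σ hσ (by rw [hproj1]; exact hsL) hlccPrem
  -- controllability of K along u ++ [σ]
  have huσ : ∀ a ∈ u ++ [σ], a ∈ Eu := by
    intro a ha
    rcases List.mem_append.mp ha with h | h
    · exact (hu a h).1
    · simp at h; subst h; exact hσ.2
  have hmem : k₁ ++ (u ++ [σ]) ∈ prefixCl K :=
    ctrl_ext hctrl hLc (u ++ [σ]) huσ k₁ hs' (by rwa [← List.append_assoc])
  obtain ⟨z, hz⟩ := hmem
  refine ⟨proj Ek z, k₁ ++ (u ++ [σ]) ++ z, hz, ?_⟩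
  have hprojid : ∀ x y : List Ev, proj Ek (x ++ y) = proj Ek x ++ proj Ek y := by
    intro x y; simp [proj, List.filter_append]
  have hpu : proj Ek u = [] := by
    apply List.filter_eq_nil_iff.mpr
    intro a ha; simpa using (hu a ha).2
  have hpσ : proj Ek [σ] = [σ] := by simp [proj, hσEk]
  rw [hprojid, hprojid, hprojid, hproj1, hpu, hpσ]
  simp
end

section
/- In the basic closed-loop supervisory control framework, if supervisors S₁, S₂, S_k achieve L_m(S₁/[G₁∥(S_k/G_k)]) ∥ L_m(S₂/[G₂∥(S_k/G_k)]) = K, where K and \overline{K} are conditionally decomposable, then the corresponding closed languages satisfy L(S₁/[G₁∥(S_k/G_k)]) ∥ L(S₂/[G₂∥(S_k/G_k)]) = \overline{K}, under the assumptions that each closed-loop system is nonblocking (\overline{L_m(S_i/·)} = L(S_i/·)) and L_m(S_i/[G_i∥(S_k/G_k)]) ⊆ P_{i+k}(K). Abstractly: if M₁ ⊆ (E₁∪E_k)* and M₂ ⊆ (E₂∪E_k)* satisfy M₁ ∥ M₂ = K, M_i ⊆ P_{i+k}(K), and N_i = \overline{M_i}, then N₁ ∥ N₂ = \overline{K}, provided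 \overline{K} = \overline{P_{1+k}(K)} ∥ \overline{P_{2+k}(K)}. -/
open scoped Classical

/-- if the marked closed-loop languages M1, M2 achieve M1 || M2 = K with
Mi included in the projections of K, then the closed languages achieve the prefix
closure of K. -/
theorem stmt15 {Ev : Type*} (E1 E2 Ek : Set Ev) (K M1 M2 : Set (List Ev))
    (hK : K ⊆ star (E1 ∪ E2 ∪ Ek))
    (hM1 : M1 ⊆ star (E1 ∪ Ek)) (hM2 : M2 ⊆ star (E2 ∪ Ek))
    (hcd : K = sync (E1 ∪ Ek) (E2 ∪ Ek) (projL (E1 ∪ Ek) K) (projL (E2 ∪ Ek) K))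
    (hcdbar : prefixCl K =
      sync (E1 ∪ Ek) (E2 ∪ Ek) (prefixCl (projL (E1 ∪ Ek) K)) (prefixCl (projL (E2 ∪ Ek) K)))
    (hach : sync (E1 ∪ Ek) (E2 ∪ Ek) M1 M2 = K)
    (hi1 : M1 ⊆ projL (E1 ∪ Ek) K) (hi2 : M2 ⊆ projL (E2 ∪ Ek) K) :
    sync (E1 ∪ Ek) (E2 ∪ Ek) (prefixCl M1) (prefixCl M2) = prefixCl K := by
  have hmono : ∀ L1 L2 : Set (List Ev), L1 ⊆ L2 → prefixCl L1 ⊆ prefixCl L2 := by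
    rintro L1 L2 h w ⟨v, hv⟩; exact ⟨v, h hv⟩
  apply Set.Subset.antisymm
  · rintro w ⟨hw, h1, h2⟩
    rw [hcdbar]
    exact ⟨hw, hmono _ _ hi1 h1, hmono _ _ hi2 h2⟩
  · rintro w ⟨v, hv⟩
    rw [← hach] at hv
    obtain ⟨hstar, h1, h2⟩ := hv
    refine ⟨fun a ha => hstar a (List.mem_append_left _ ha), ⟨proj (E1 ∪ Ek) v, ?_⟩,
      ⟨proj (E2 ∪ Ek) v, ?_⟩⟩
    · rw [show proj (E1 ∪ Ek) w ++ proj (E1 ∪ Ek) v = proj (E1 ∪ Ek) (w ++ v) from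
        (List.filter_append ..).symm]; exact h1
    · rw [show proj (E2 ∪ Ek) w ++ proj (E2 ∪ Ek) v = proj (E2 ∪ Ek) (w ++ v) from
        (List.filter_append ..).symm]; exact h2
end
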